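/- Let p ≥ 3 be prime, θ, α ∈ ℚ_p with |θ − 1|_p = 1/p, |α|_p = 1, |1 − α|_p ≤ 1/p², and let λ be a weight with λ(0) = 1, λ(1) = α, |λ(i)|_p < 1 for i ≥ 2, |λ(i)|_p → 0, δ := max_{i≥2}|λ(i)|_p > 0. Then for all x, y ∈ B_{δ/p} one has ‖F⁻(x) − F⁻(y)‖ ≤ δ·‖x − y‖; in particular F⁻ is a strict contraction on B_{δ/p}. -/

import Mathlib

open Filter

private lemma padd' {p : ℕ} [Fact p.Prime] {a b : ℚ_[p]} {c : ℝ} (ha : ‖a‖ ≤ c) (hb : ‖b‖ ≤ c) :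
    ‖a + b‖ ≤ c :=
  le_trans (Padic.nonarchimedean a b) (max_le ha hb)

private lemma psub' {p : ℕ} [Fact p.Prime] {a b : ℚ_[p]} {c : ℝ} (ha : ‖a‖ ≤ c) (hb : ‖b‖ ≤ c) :
    ‖a - b‖ ≤ c := by
  rw [sub_eq_add_neg]; exact padd' ha (by rwa [norm_neg])

private lemma pdom' {p : ℕ} [Fact p.Prime] {a b : ℚ_[p]} (h : ‖b‖ < ‖a‖) : ‖a + b‖ = ‖a‖ := by
  rw [Padic.add_eq_max_of_ne (ne_of_gt h), max_eq_left h.le]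

private lemma ptwo' {p : ℕ} [Fact p.Prime] (hp : 3 ≤ p) : ‖(2 : ℚ_[p])‖ = 1 := by
  have h := Padic.norm_intCast_lt_one_iff (p := p) (k := 2)
  have h2 : ¬ ((p : ℤ) ∣ 2) := fun hd => by
    have := Int.le_of_dvd (by norm_num) hd; omega
  have hle := Padic.norm_int_le_one (p := p) 2
  push_cast at h hle
  rcases lt_or_eq_of_le hle with h' | h'
  · exact absurd (h.mp h') h2
  · exact h'

/-- Under the conditions `|θ-1|_p = 1/p`, `|α|_p = 1`,
`|1-α|_p ≤ 1/p²`, and with a weight `λ` satisfying `λ(0) = 1`, `λ(1) = α`,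
`|λ(i)|_p < 1` for `i ≥ 2`, `|λ(i)|_p → 0`, `δ = max_{i≥2}|λ(i)|_p > 0`,
one has `‖F⁻(x) - F⁻(y)‖ ≤ δ·‖x - y‖` for all `x, y ∈ B_{δ/p}`
(sup-norm on sequences indexed by `i ≥ 2`), i.e. `F⁻` is a strict
contraction on `B_{δ/p}`. -/
theorem potts_Fminus_contraction (p : ℕ) [Fact p.Prime] (hp : 3 ≤ p)
    (θ α : ℚ_[p]) (hθ : ‖θ - 1‖ = 1 / (p : ℝ)) (hα : ‖α‖ = 1)
    (hα1 : ‖1 - α‖ ≤ 1 / (p : ℝ) ^ 2)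
    (L : ℕ → ℚ_[p]) (hL0 : L 0 = 1) (hL1 : L 1 = α)
    (hLlt : ∀ i, 2 ≤ i → ‖L i‖ < 1)
    (hLten : Tendsto (fun i => ‖L i‖) atTop (nhds 0))
    (δ : ℝ) (hδpos : 0 < δ)
    (hδub : ∀ i, 2 ≤ i → ‖L i‖ ≤ δ) (hδmax : ∃ i, 2 ≤ i ∧ ‖L i‖ = δ)
    (x y : ℕ → ℚ_[p])
    (hxten : Tendsto (fun i => ‖x i‖) atTop (nhds 0))
    (hyten : Tendsto (fun i => ‖y i‖) atTop (nhds 0))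
    (hxB : ∀ i, 2 ≤ i → ‖x i‖ ≤ δ / (p : ℝ))
    (hyB : ∀ i, 2 ≤ i → ‖y i‖ ≤ δ / (p : ℝ))
    (X Y : ℚ_[p]) (hX : X = ∑' j : ℕ, x (j + 2)) (hY : Y = ∑' j : ℕ, y (j + 2))
    (sX sY : ℚ_[p])
    (hsX : sX ^ 2 = (X + θ * (1 - α)) ^ 2 + 4 * α * (X + 1)) (hsX2 : ‖sX - 2‖ < 1)
    (hsY : sY ^ 2 = (Y + θ * (1 - α)) ^ 2 + 4 * α * (Y + 1)) (hsY2 : ‖sY - 2‖ < 1) :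
    ∀ i, 2 ≤ i →
      ‖L i * ((2 * (θ - 1) * x i + (α - 1) * θ + X - sX + 2) /
            ((α + 1) * θ + X - sX)) -
        L i * ((2 * (θ - 1) * y i + (α - 1) * θ + Y - sY + 2) /
            ((α + 1) * θ + Y - sY))‖
        ≤ δ * ⨆ j : ℕ, ‖x (j + 2) - y (j + 2)‖ := by
  intro i hi
  -- basic real facts
  have hp1 : (1 : ℝ) < p := by exact_mod_cast lt_of_lt_of_le (by norm_num) hp
  have hp0 : (0 : ℝ) < p := lt_trans one_pos hp1
  have hip : (0 : ℝ) < 1 / p := by positivity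
  have hip1 : (1 : ℝ) / p < 1 := by rw [div_lt_one hp0]; exact hp1
  have hδ1 : δ < 1 := by
    obtain ⟨i0, hi0, hE⟩ := hδmax
    rw [← hE]; exact hLlt i0 hi0
  have hδp1 : δ / (p : ℝ) ≤ 1 := (div_le_one hp0).mpr (hδ1.le.trans hp1.le)
  -- norms of constants
  have h2 : ‖(2 : ℚ_[p])‖ = 1 := ptwo' hp
  have h4 : ‖(4 : ℚ_[p])‖ = 1 := by
    have : (4 : ℚ_[p]) = 2 * 2 := by norm_num
    rw [this, Padic.padicNormE.mul, h2, one_mul]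
  have hθn : ‖θ‖ = 1 := by
    have : θ = 1 + (θ - 1) := by ring
    rw [this, pdom' (by rw [hθ, norm_one]; exact hip1)]
    exact norm_one
  have h2θ : ‖2 * (θ - 1)‖ = 1 / p := by rw [Padic.padicNormE.mul, h2, one_mul, hθ]
  -- r bound
  set r : ℝ := max (δ / p) (1 / (p : ℝ) ^ 2) with hrdef
  have hr0 : 0 ≤ r := le_max_of_le_right (by positivity)
  have hrlt : r < 1 / p := by
    apply max_lt
    · rw [div_lt_div_iff₀ hp0 hp0, one_mul]
      exact mul_lt_of_lt_one_left hp0 hδ1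
    · rw [div_lt_div_iff₀ (by positivity) hp0, one_mul, one_mul, sq]
      exact lt_mul_of_one_lt_left hp0 hp1
  have hr1 : r ≤ 1 := le_of_lt (lt_trans hrlt hip1)
  have hδpr : δ / p ≤ r := le_max_left _ _
  have hp2r : 1 / (p : ℝ) ^ 2 ≤ r := le_max_right _ _
  -- sup d
  set d : ℝ := ⨆ j : ℕ, ‖x (j + 2) - y (j + 2)‖ with hddef
  have hbdd : BddAbove (Set.range fun j : ℕ => ‖x (j + 2) - y (j + 2)‖) := by
    refine ⟨δ / p, ?_⟩
    rintro - ⟨j, rfl⟩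
    exact psub' (hxB _ (by omega)) (hyB _ (by omega))
  have hd0 : 0 ≤ d := Real.iSup_nonneg fun j => norm_nonneg _
  have hdle : ∀ j : ℕ, ‖x (j + 2) - y (j + 2)‖ ≤ d := fun j => le_ciSup hbdd j
  -- sums
  have hsum : ∀ (z : ℕ → ℚ_[p]), Tendsto (fun i => ‖z i‖) atTop (nhds 0) →
      Summable (fun j : ℕ => z (j + 2)) := by
    intro z hz
    apply NonarchimedeanAddGroup.summable_of_tendsto_cofinite_zero
    rw [Nat.cofinite_eq_atTop, tendsto_zero_iff_norm_tendsto_zero]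
    exact (hz.comp (tendsto_add_atTop_nat 2))
  have sx := hsum x hxten
  have sy := hsum y hyten
  have hXn : ‖X‖ ≤ δ / p := by
    rw [hX]
    exact IsUltrametricDist.norm_tsum_le_of_forall_le_of_nonneg (by positivity)
      fun j => hxB _ (by omega)
  have hYn : ‖Y‖ ≤ δ / p := by
    rw [hY]
    exact IsUltrametricDist.norm_tsum_le_of_forall_le_of_nonneg (by positivity)
      fun j => hyB _ (by omega)
  have hΔX : ‖X - Y‖ ≤ d := by
    rw [hX, hY, ← Summable.tsum_sub sx sy]
    exact IsUltrametricDist.norm_tsum_le_of_forall_le_of_nonneg hd0 hdle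
  -- key bounds for (Z, sZ)
  have key : ∀ Z sZ : ℚ_[p], ‖Z‖ ≤ δ / p →
      sZ ^ 2 = (Z + θ * (1 - α)) ^ 2 + 4 * α * (Z + 1) → ‖sZ - 2‖ < 1 →
      ‖sZ - 2‖ ≤ r ∧ ‖(α + 1) * θ + Z - sZ‖ = 1 / p := by
    intro Z sZ hZn hsZ hsZ2
    have hZr : ‖Z‖ ≤ r := le_trans hZn hδpr
    have hθα : ‖θ * (1 - α)‖ ≤ r := by
      rw [Padic.padicNormE.mul, hθn, one_mul]; exact le_trans hα1 hp2r
    have hZ2 : ‖Z + θ * (1 - α)‖ ≤ r := padd' hZr hθα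
    have hsq : ‖sZ ^ 2 - 4‖ ≤ r := by
      have heq : sZ ^ 2 - 4 = (Z + θ * (1 - α)) ^ 2 + 4 * α * Z + (4 * α - 4) := by
        rw [hsZ]; ring
      rw [heq]
      refine padd' (padd' ?_ ?_) ?_
      · rw [sq, Padic.padicNormE.mul]
        calc ‖Z + θ * (1 - α)‖ * ‖Z + θ * (1 - α)‖ ≤ r * 1 :=
          mul_le_mul hZ2 (le_trans hZ2 hr1) (norm_nonneg _) hr0
        _ = r := mul_one r
      · rw [Padic.padicNormE.mul, Padic.padicNormE.mul, h4, hα, one_mul, one_mul]; exact hZr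
      · have : (4 : ℚ_[p]) * α - 4 = -(4 * (1 - α)) := by ring
        rw [this, norm_neg, Padic.padicNormE.mul, h4, one_mul]
        exact le_trans hα1 hp2r
    have hs2 : ‖sZ + 2‖ = 1 := by
      have heq : sZ + 2 = 4 + (sZ - 2) := by ring
      rw [heq, pdom' (by rw [h4]; exact hsZ2), h4]
    have hsZr : ‖sZ - 2‖ ≤ r := by
      have heq : (sZ - 2) * (sZ + 2) = sZ ^ 2 - 4 := by ring
      have := congrArg (fun t : ℚ_[p] => ‖t‖) heq
      simp only [Padic.padicNormE.mul, hs2, mul_one] at this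
      rwa [this]
    refine ⟨hsZr, ?_⟩
    have heq : (α + 1) * θ + Z - sZ = 2 * (θ - 1) + ((α - 1) * θ + Z - (sZ - 2)) := by ring
    rw [heq, pdom', h2θ]
    rw [h2θ]
    refine lt_of_le_of_lt ?_ hrlt
    refine psub' (padd' ?_ hZr) hsZr
    rw [Padic.padicNormE.mul, hθn, mul_one]
    have : α - 1 = -(1 - α) := by ring
    rw [this, norm_neg]
    exact le_trans hα1 hp2r
  obtain ⟨hsXr, hBX⟩ := key X sX hXn hsX hsX2
  obtain ⟨hsYr, hBY⟩ := key Y sY hYn hsY hsY2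
  -- Δs bound
  have hS : ‖sX + sY‖ = 1 := by
    have heq : sX + sY = 4 + ((sX - 2) + (sY - 2)) := by ring
    rw [heq, pdom', h4]
    rw [h4]
    exact lt_of_le_of_lt (Padic.nonarchimedean _ _) (max_lt hsX2 hsY2)
  have hST : ‖(sX + sY) - (4 * α + X + Y + 2 * θ * (1 - α))‖ ≤ r := by
    have heq : (sX + sY) - (4 * α + X + Y + 2 * θ * (1 - α)) =
        (sX - 2) + (sY - 2) + (4 * (1 - α)) - X - Y - 2 * θ * (1 - α) := by ring
    rw [heq]
    refine psub' (psub' (psub' (padd' (padd' hsXr hsYr) ?_) (le_trans hXn hδpr))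
      (le_trans hYn hδpr)) ?_
    · rw [Padic.padicNormE.mul, h4, one_mul]; exact le_trans hα1 hp2r
    · have : (2 : ℚ_[p]) * θ * (1 - α) = 2 * (θ * (1 - α)) := by ring
      rw [this, Padic.padicNormE.mul, Padic.padicNormE.mul, h2, hθn, one_mul, one_mul]
      exact le_trans hα1 hp2r
  have hid : (sX + sY) * ((X - Y) - (sX - sY)) =
      (X - Y) * ((sX + sY) - (4 * α + X + Y + 2 * θ * (1 - α))) := by
    linear_combination hsY - hsX
  have hΔXs : ‖(X - Y) - (sX - sY)‖ ≤ d * r := by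
    have h1 := congrArg (fun t : ℚ_[p] => ‖t‖) hid
    simp only [Padic.padicNormE.mul, hS, one_mul] at h1
    rw [h1]
    exact mul_le_mul hΔX hST (norm_nonneg _) hd0
  -- numerator pieces
  set Ax : ℚ_[p] := 2 * (θ - 1) * x i + (α - 1) * θ + X - sX + 2 with hAx
  set Ay : ℚ_[p] := 2 * (θ - 1) * y i + (α - 1) * θ + Y - sY + 2 with hAy
  set Bx : ℚ_[p] := (α + 1) * θ + X - sX with hBx
  set By : ℚ_[p] := (α + 1) * θ + Y - sY with hBy
  have hxid : ‖x i - y i‖ ≤ d := by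
    have : i = (i - 2) + 2 := by omega
    rw [this]; exact hdle (i - 2)
  have hAxy : ‖Ax - Ay‖ ≤ d / p := by
    have heq : Ax - Ay = 2 * (θ - 1) * (x i - y i) + ((X - Y) - (sX - sY)) := by
      rw [hAx, hAy]; ring
    rw [heq]
    refine padd' ?_ ?_
    · rw [Padic.padicNormE.mul, h2θ]
      calc (1 / (p:ℝ)) * ‖x i - y i‖ ≤ (1 / p) * d :=
        mul_le_mul_of_nonneg_left hxid hip.le
      _ = d / p := by ring
    · calc ‖(X - Y) - (sX - sY)‖ ≤ d * r := hΔXs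
        _ ≤ d * (1 / p) := mul_le_mul_of_nonneg_left hrlt.le hd0
        _ = d / p := by ring
  have hAyn : ‖Ay‖ ≤ 1 / p := by
    have heq : Ay = 2 * (θ - 1) * y i + ((α - 1) * θ + Y - (sY - 2)) := by
      rw [hAy]; ring
    rw [heq]
    refine padd' ?_ (le_of_lt (lt_of_le_of_lt ?_ hrlt))
    · rw [Padic.padicNormE.mul, h2θ]
      calc (1 / (p:ℝ)) * ‖y i‖ ≤ (1 / p) * 1 :=
        mul_le_mul_of_nonneg_left (le_trans (hyB i hi) hδp1) hip.le
      _ = 1 / p := mul_one _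
    · refine psub' (padd' ?_ (le_trans hYn hδpr)) hsYr
      rw [Padic.padicNormE.mul, hθn, mul_one]
      have : α - 1 = -(1 - α) := by ring
      rw [this, norm_neg]
      exact le_trans hα1 hp2r
  set W : ℚ_[p] := (Ax - Ay) - ((Ax - Ay) * y i + Ay * (y i - x i)) with hW
  have hWn : ‖W‖ ≤ d / p := by
    rw [hW]
    refine psub' hAxy (padd' ?_ ?_)
    · rw [Padic.padicNormE.mul]
      calc ‖Ax - Ay‖ * ‖y i‖ ≤ (d / p) * 1 :=
        mul_le_mul hAxy (le_trans (hyB i hi) hδp1) (norm_nonneg _) (by positivity)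
      _ = d / p := mul_one _
    · rw [Padic.padicNormE.mul]
      have : ‖y i - x i‖ ≤ d := by rw [← norm_neg]; simpa using hxid
      calc ‖Ay‖ * ‖y i - x i‖ ≤ (1 / p) * d :=
        mul_le_mul hAyn this (norm_nonneg _) hip.le
      _ = d / p := by ring
  -- denominators nonzero
  have hBx0 : Bx ≠ 0 := by
    intro h; rw [h, norm_zero] at hBX; exact absurd hBX.symm (ne_of_gt hip)
  have hBy0 : By ≠ 0 := by
    intro h; rw [h, norm_zero] at hBY; exact absurd hBY.symm (ne_of_gt hip)
  -- main algebraic identity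
  have hmain : L i * (Ax / Bx) - L i * (Ay / By) = L i * (2 * (θ - 1) * W) / (Bx * By) := by
    rw [hW, hAx, hAy]
    field_simp
    rw [hBx, hBy]
    ring
  calc ‖L i * (Ax / Bx) - L i * (Ay / By)‖
      = ‖L i‖ * (‖2 * (θ - 1)‖ * ‖W‖) / (‖Bx‖ * ‖By‖) := by
        rw [hmain, norm_div, Padic.padicNormE.mul (L i) (2 * (θ - 1) * W), Padic.padicNormE.mul (2 * (θ - 1)) W, Padic.padicNormE.mul Bx By]
    _ = ‖L i‖ * ((1 / p) * ‖W‖) / ((1 / p) * (1 / p)) := by rw [h2θ, hBX, hBY]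
    _ = ‖L i‖ * ‖W‖ * p := by field_simp
    _ ≤ δ * (d / p) * p := by
        refine mul_le_mul_of_nonneg_right ?_ hp0.le
        exact mul_le_mul (hδub i hi) hWn (norm_nonneg _) hδpos.le
    _ = δ * d := by field_simp
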